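/- Let G be a graph, 𝒟 a cross-free family of edge-cuts of G, and [A*,B*] an edge-cut of G. For each [A,B] ∈ 𝒟 let f([A,B]) = [A ∩ B*, B ∪ A*], and let 𝒟' = {[A*,B*]} ∪ {f([A,B]) : [A,B] ∈ 𝒟}. Then there exists 𝒟'' ⊆ 𝒟' − {[A*,B*]} with |𝒟''| ≤ 2·(order of [A*,B*]) such that every f([A,B]) in 𝒟' outside 𝒟'' ∪ {[A*,B*]} has order at most the order of [A,B], and every f([A,B]) ∈ 𝒟'' has order at most the order of [A,B] plus the order of [A*,B*]. -/

import Mathlib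

/-- A finite multigraph (loops and parallel edges allowed): each edge in `E`
has an unordered pair of endpoints in `V`. -/
structure Multigraph (V E : Type) where
  ends : E → Sym2 V

namespace Multigraph

variable {V E : Type}

/-- The edge `e` has an end in the vertex set `A`. -/
def incident (G : Multigraph V E) (A : Set V) (e : E) : Prop :=
  ∃ x ∈ G.ends e, x ∈ A

/-- The edge `e` has one end in `A` and one end in `B`. -/
def crosses (G : Multigraph V E) (A B : Set V) (e : E) : Prop :=
  G.incident A e ∧ G.incident B e

/-- The order of the edge-cut `[A,B]`: the number of edges with one end in `A`
and one end in `B`. -/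
noncomputable def cutOrder (G : Multigraph V E) (A B : Set V) : ℕ :=
  {e | G.crosses A B e}.ncard

/-- `[A,B]` is an edge-cut of `G`: an ordered pair of disjoint vertex sets
covering all vertices. -/
def IsCut (G : Multigraph V E) (A B : Set V) : Prop :=
  Disjoint A B ∧ A ∪ B = Set.univ

end Multigraph

/-- A family of edge-cuts is cross-free if the first components of any two
distinct members are disjoint. -/
def CrossFree {V : Type} (𝓓 : Set (Set V × Set V)) : Prop :=
  ∀ p ∈ 𝓓, ∀ q ∈ 𝓓, p ≠ q → Disjoint p.1 q.1

lemma ncard_biUnion_le_two_mul {E V : Type} (s : Set E) (hs : s.Finite) (t : E → Set V)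
    (ht : ∀ e, (t e).ncard ≤ 2) : (⋃ e ∈ s, t e).ncard ≤ 2 * s.ncard := by
  refine Set.Finite.induction_on (motive := fun s _ => (⋃ e ∈ s, t e).ncard ≤ 2 * s.ncard) s hs (by simp) ?_
  intro a s ha hfin ih
  have h1 : (⋃ e ∈ insert a s, t e) = t a ∪ ⋃ e ∈ s, t e := by
    simp [Set.biUnion_insert]
  rw [h1, Set.ncard_insert_of_notMem ha hfin]
  calc (t a ∪ ⋃ e ∈ s, t e).ncard ≤ (t a).ncard + (⋃ e ∈ s, t e).ncard :=
        Set.ncard_union_le _ _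
    _ ≤ 2 + 2 * s.ncard := Nat.add_le_add (ht a) ih
    _ = 2 * (s.ncard + 1) := by ring

lemma sym2_mem_set_ncard_le_two {V : Type} (z : Sym2 V) : {x | x ∈ z}.ncard ≤ 2 := by
  induction z using Sym2.ind with
  | _ a b =>
    have h : {x | x ∈ s(a, b)} = insert a {b} := by
      ext x; simp [Sym2.mem_iff]
    rw [h]
    calc (insert a {b} : Set V).ncard ≤ ({b} : Set V).ncard + 1 := Set.ncard_insert_le _ _
      _ ≤ 2 := by simp

/-- Let `G` be a graph, `𝓓` a cross-free family of edge-cuts of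
`G`, and `[A*,B*]` an edge-cut of `G`. For each `[A,B] ∈ 𝓓` let
`f([A,B]) = [A ∩ B*, B ∪ A*]`, and let `𝓓' = {[A*,B*]} ∪ f '' 𝓓`. Then there
exists `𝓓'' ⊆ 𝓓' − {[A*,B*]}` with `|𝓓''| ≤ 2·|[A*,B*]|` such that every
`f([A,B])` outside `𝓓'' ∪ {[A*,B*]}` has order at most the order of `[A,B]`,
and every `f([A,B]) ∈ 𝓓''` has order at most the order of `[A,B]` plus the
order of `[A*,B*]`. -/
theorem crossFree_insert_one {V E : Type} [Fintype V] [Fintype E]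
    (G : Multigraph V E) (𝓓 : Set (Set V × Set V)) (hcf : CrossFree 𝓓)
    (hcut : ∀ p ∈ 𝓓, G.IsCut p.1 p.2)
    (A' B' : Set V) (hstar : G.IsCut A' B') :
    ∃ 𝓓'' ⊆ (fun p : Set V × Set V => (p.1 ∩ B', p.2 ∪ A')) '' 𝓓,
      (A', B') ∉ 𝓓'' ∧
      𝓓''.ncard ≤ 2 * G.cutOrder A' B' ∧
      (∀ p ∈ 𝓓, (p.1 ∩ B', p.2 ∪ A') ∉ 𝓓'' → (p.1 ∩ B', p.2 ∪ A') ≠ (A', B') →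
        G.cutOrder (p.1 ∩ B') (p.2 ∪ A') ≤ G.cutOrder p.1 p.2) ∧
      (∀ p ∈ 𝓓, (p.1 ∩ B', p.2 ∪ A') ∈ 𝓓'' →
        G.cutOrder (p.1 ∩ B') (p.2 ∪ A') ≤
          G.cutOrder p.1 p.2 + G.cutOrder A' B') := by
  classical
  set f : Set V × Set V → Set V × Set V := fun p => (p.1 ∩ B', p.2 ∪ A') with hfdef
  set 𝓓'' : Set (Set V × Set V) :=
    {q | ∃ p ∈ 𝓓, q = f p ∧ ∃ e, G.crosses (f p).1 (f p).2 e ∧ ¬ G.crosses p.1 p.2 e}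
    with hDdef
  -- key extraction lemma
  have key : ∀ p : Set V × Set V, ∀ e : E,
      G.crosses (f p).1 (f p).2 e → ¬ G.crosses p.1 p.2 e →
      G.crosses A' B' e ∧ ∃ x, x ∈ G.ends e ∧ x ∈ p.1 ∧ x ∈ B' := by
    intro p e hc hnc
    obtain ⟨⟨x, hxe, hx1, hxB⟩, ⟨y, hye, hy⟩⟩ := hc
    have hy' : y ∈ A' := by
      rcases hy with h | h
      · exact absurd ⟨⟨x, hxe, hx1⟩, ⟨y, hye, h⟩⟩ hnc
      · exact h
    exact ⟨⟨⟨y, hye, hy'⟩, ⟨x, hxe, hxB⟩⟩, x, hxe, hx1, hxB⟩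
  refine ⟨𝓓'', ?_, ?_, ?_, ?_, ?_⟩
  · rintro q ⟨p, hp, rfl, -⟩
    exact ⟨p, hp, rfl⟩
  · rintro ⟨p, hp, heq, e, hc, hnc⟩
    obtain ⟨-, x, -, hx1, hxB⟩ := key p e hc hnc
    have hxA : x ∈ A' := by
      have : (f p).1 = A' := by rw [← heq]
      rw [← this]; exact ⟨hx1, hxB⟩
    exact Set.disjoint_left.mp hstar.1 hxA hxB
  · -- cardinality bound
    have hQ : ∀ q : Set V × Set V, q ∈ 𝓓'' →
        ∃ p : Set V × Set V, ∃ x : V, p ∈ 𝓓 ∧ q = f p ∧ x ∈ p.1 ∧ x ∈ B' ∧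
          ∃ e, G.crosses A' B' e ∧ x ∈ G.ends e := by
      rintro q ⟨p, hp, rfl, e, hc, hnc⟩
      obtain ⟨hcross, x, hxe, hx1, hxB⟩ := key p e hc hnc
      exact ⟨p, x, hp, rfl, hx1, hxB, e, hcross, hxe⟩
    rcases Set.eq_empty_or_nonempty 𝓓'' with hE | ⟨q0, hq0⟩
    · simp [hE]
    choose P X hP hq hx1 hxB hex using hQ
    set X' : Set V := ⋃ e ∈ {e | G.crosses A' B' e}, {x | x ∈ G.ends e} with hX'
    have hmap : ∀ q ∈ 𝓓'', (fun q => if h : q ∈ 𝓓'' then X q h else X q0 hq0) q ∈ X' := by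
      intro q hq'
      simp only [dif_pos hq']
      obtain ⟨e, hce, hxe⟩ := hex q hq'
      exact Set.mem_biUnion hce hxe
    have hinj : Set.InjOn (fun q => if h : q ∈ 𝓓'' then X q h else X q0 hq0) 𝓓'' := by
      intro q1 h1 q2 h2 heq
      simp only [dif_pos h1, dif_pos h2] at heq
      have hx1' : X q1 h1 ∈ (P q1 h1).1 := hx1 q1 h1
      have hx2' : X q1 h1 ∈ (P q2 h2).1 := by rw [heq]; exact hx1 q2 h2
      have hPP : P q1 h1 = P q2 h2 := by
        by_contra hne
        exact Set.disjoint_left.mp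
          (hcf _ (hP q1 h1) _ (hP q2 h2) hne) hx1' hx2'
      rw [hq q1 h1, hq q2 h2, hPP]
    calc 𝓓''.ncard ≤ X'.ncard :=
          Set.ncard_le_ncard_of_injOn _ hmap hinj (Set.toFinite _)
      _ ≤ 2 * G.cutOrder A' B' :=
          ncard_biUnion_le_two_mul _ (Set.toFinite _) _
            (fun e => sym2_mem_set_ncard_le_two _)
  · -- outside 𝓓'': order does not increase
    intro p hp hnot _
    have hsub : {e | G.crosses (p.1 ∩ B') (p.2 ∪ A') e} ⊆ {e | G.crosses p.1 p.2 e} := by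
      intro e he
      by_contra hnc
      exact hnot ⟨p, hp, rfl, e, he, hnc⟩
    exact Set.ncard_le_ncard hsub (Set.toFinite _)
  · -- inside 𝓓'': general bound
    intro p hp _
    have hsub : {e | G.crosses (p.1 ∩ B') (p.2 ∪ A') e} ⊆
        {e | G.crosses p.1 p.2 e} ∪ {e | G.crosses A' B' e} := by
      rintro e ⟨⟨x, hxe, hx1, hxB⟩, ⟨y, hye, hy⟩⟩
      rcases hy with h | h
      · exact Or.inl ⟨⟨x, hxe, hx1⟩, ⟨y, hye, h⟩⟩
      · exact Or.inr ⟨⟨y, hye, h⟩, ⟨x, hxe, hxB⟩⟩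
    calc G.cutOrder (p.1 ∩ B') (p.2 ∪ A')
        ≤ ({e | G.crosses p.1 p.2 e} ∪ {e | G.crosses A' B' e}).ncard :=
          Set.ncard_le_ncard hsub (Set.toFinite _)
      _ ≤ G.cutOrder p.1 p.2 + G.cutOrder A' B' := Set.ncard_union_le _ _
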